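/- Let m ≥ 1, let V be a real symmetric 2m×2m matrix with V + Z/2 positive semidefinite where Z = diag(I_m, −I_m), let ε > 0, and set V^ε = V + εI. Let w_1,…,w_m ∈ (0,1], W = diag(w_1,…,w_m), 𝒲 = W ⊕ W, and define V^ε_𝒲 = −I/2 + [I − 𝒲 + 𝒲^{1/2}(V^ε + I/2)^{-1}𝒲^{1/2}]^{-1} (the inverses exist since V^ε + I/2 is positive definite). Then V^ε_𝒲 + I/2 − M is positive semidefinite, where M is the block-diagonal matrix diag((I_m − W + ε^{-1} W)^{-1}, (I_m − W + (1+ε)^{-1} W)^{-1}). -/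

import Mathlib

open Matrix

/-- `Z = diag(I_m, −I_m)` as a `2m × 2m` matrix. -/
def Zmat (m : ℕ) : Matrix (Fin (2 * m)) (Fin (2 * m)) ℝ :=
  Matrix.diagonal fun i => if (i : ℕ) < m then 1 else -1

/-- `𝒲 = W ⊕ W`: the doubled vector of weights, `(w_1,…,w_m,w_1,…,w_m)`. -/
def wExt {m : ℕ} (w : Fin m → ℝ) : Fin (2 * m) → ℝ := fun i =>
  if h : (i : ℕ) < m then w ⟨i, h⟩ else w ⟨(i : ℕ) - m, by have := i.isLt; omega⟩

/-- Identification of `Fin (2*m)` with `Fin m ⊕ Fin m` (first block then second block). -/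
def splitIdx (m : ℕ) : Fin (2 * m) → Fin m ⊕ Fin m := fun i =>
  if h : (i : ℕ) < m then Sum.inl ⟨i, h⟩
  else Sum.inr ⟨(i : ℕ) - m, by have := i.isLt; omega⟩

/-- `V_𝒲 = −I/2 + [I − 𝒲 + 𝒲^{1/2}(V + I/2)⁻¹𝒲^{1/2}]⁻¹`, with `𝒲 = W ⊕ W` and
`𝒲^{1/2} = diag(√w) ⊕ diag(√w)`. -/
noncomputable def Vupd {m : ℕ} (V : Matrix (Fin (2 * m)) (Fin (2 * m)) ℝ)
    (w : Fin m → ℝ) : Matrix (Fin (2 * m)) (Fin (2 * m)) ℝ :=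
  (-(1 / 2 : ℝ)) • 1 +
    (1 - Matrix.diagonal (wExt w) +
      Matrix.diagonal (fun i => Real.sqrt (wExt w i)) * (V + (1 / 2 : ℝ) • 1)⁻¹ *
        Matrix.diagonal (fun i => Real.sqrt (wExt w i)))⁻¹

/-- The block-diagonal matrix `M = diag((I_m − W + ε⁻¹ W)⁻¹, (I_m − W + (1+ε)⁻¹ W)⁻¹)`. -/
noncomputable def Mblock {m : ℕ} (w : Fin m → ℝ) (ε : ℝ) :
    Matrix (Fin (2 * m)) (Fin (2 * m)) ℝ :=
  (Matrix.fromBlocks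
      ((1 - Matrix.diagonal w + ε⁻¹ • Matrix.diagonal w)⁻¹) 0 0
      ((1 - Matrix.diagonal w + (1 + ε)⁻¹ • Matrix.diagonal w)⁻¹)).submatrix
    (splitIdx m) (splitIdx m)

section Helpers
variable {n : Type*} [Fintype n] [DecidableEq n]

lemma diag_inv {d : n → ℝ} (hd : ∀ i, d i ≠ 0) :
    (Matrix.diagonal d)⁻¹ = Matrix.diagonal (fun i => (d i)⁻¹) :=
  Matrix.inv_eq_right_inv (by
    have h : (fun i => d i * (d i)⁻¹) = fun _ => (1:ℝ) :=
      funext fun i => mul_inv_cancel₀ (hd i)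
    rw [Matrix.diagonal_mul_diagonal, h, Matrix.diagonal_one])

lemma diag_conjT (d : n → ℝ) : (Matrix.diagonal d)ᴴ = Matrix.diagonal d := by
  rw [Matrix.diagonal_conjTranspose]
  congr 1

lemma posDef_conj_diag {A : Matrix n n ℝ} (hA : A.PosDef) {s : n → ℝ}
    (hs : ∀ i, s i ≠ 0) : (Matrix.diagonal s * A * Matrix.diagonal s).PosDef := by
  refine Matrix.PosDef.of_dotProduct_mulVec_pos ?_ ?_
  · have := Matrix.isHermitian_conjTranspose_mul_mul (Matrix.diagonal s) hA.1
    rwa [diag_conjT] at this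
  · intro x hx
    have hx' : Matrix.diagonal s *ᵥ x ≠ 0 := by
      intro h
      apply hx
      funext i
      have := congrFun h i
      simp only [Matrix.mulVec_diagonal, Pi.zero_apply] at this
      simpa [Pi.zero_apply] using (mul_eq_zero.mp this).resolve_left (hs i)
    have h2 := hA.dotProduct_mulVec_pos hx'
    have hrw : Matrix.diagonal s * A * Matrix.diagonal s
        = (Matrix.diagonal s)ᴴ * A * Matrix.diagonal s := by rw [diag_conjT]
    rw [hrw]
    simpa only [star_mulVec, dotProduct_mulVec, vecMul_vecMul] using h2

lemma inv_sub_inv_posSemidef {B N : Matrix n n ℝ} (hB : B.PosDef) (hN : N.PosDef)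
    (hNB : (N - B).PosSemidef) : (B⁻¹ - N⁻¹).PosSemidef := by
  have hBu : IsUnit B.det := (Matrix.isUnit_iff_isUnit_det _).mp hB.isUnit
  have hNu : IsUnit N.det := (Matrix.isUnit_iff_isUnit_det _).mp hN.isUnit
  have key : B⁻¹ - N⁻¹ =
      N⁻¹ * (N - B) * N⁻¹ + (N⁻¹ * (N - B)) * B⁻¹ * ((N - B) * N⁻¹) := by
    have e1 : N⁻¹ * (N - B) = 1 - N⁻¹ * B := by
      rw [Matrix.mul_sub, Matrix.nonsing_inv_mul _ hNu]
    have e2 : (N - B) * N⁻¹ = 1 - B * N⁻¹ := by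
      rw [Matrix.sub_mul, Matrix.mul_nonsing_inv _ hNu]
    rw [e1, e2]
    have e3 : (1 - N⁻¹ * B) * B⁻¹ = B⁻¹ - N⁻¹ := by
      rw [Matrix.sub_mul, Matrix.one_mul, Matrix.mul_nonsing_inv_cancel_right _ _ hBu]
    rw [e3]
    have c1 : B⁻¹ * (B * N⁻¹) = N⁻¹ := Matrix.nonsing_inv_mul_cancel_left _ _ hBu
    simp only [sub_mul, mul_sub, mul_one, one_mul, Matrix.mul_assoc, c1,
      Matrix.mul_nonsing_inv _ hBu]
    abel
  have t1 : (N⁻¹ * (N - B) * N⁻¹).PosSemidef := by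
    have := hNB.conjTranspose_mul_mul_same N⁻¹
    rwa [hN.inv.isHermitian] at this
  have t2 : ((N⁻¹ * (N - B)) * B⁻¹ * ((N - B) * N⁻¹)).PosSemidef := by
    have := hB.inv.posSemidef.conjTranspose_mul_mul_same ((N - B) * N⁻¹)
    rwa [Matrix.conjTranspose_mul, hN.inv.isHermitian, hNB.isHermitian] at this
  rw [key]
  exact t1.add t2

end Helpers

/-- if `V` is real symmetric with `V + Z/2` positive semidefinite, `ε > 0`,
`V^ε = V + εI`, and `w_k ∈ (0,1]`, then `V^ε_𝒲 + I/2 − M` is positive semidefinite, where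
`M = diag((I_m − W + ε⁻¹W)⁻¹, (I_m − W + (1+ε)⁻¹W)⁻¹)`. -/
theorem eps_update_lower_bound {m : ℕ} (hm : 1 ≤ m)
    (V : Matrix (Fin (2 * m)) (Fin (2 * m)) ℝ) (hV : V.IsSymm)
    (hVZ : (V + (1 / 2 : ℝ) • Zmat m).PosSemidef)
    (ε : ℝ) (hε : 0 < ε)
    (w : Fin m → ℝ) (hw0 : ∀ k, 0 < w k) (hw1 : ∀ k, w k ≤ 1) :
    (Vupd (V + ε • 1) w + (1 / 2 : ℝ) • 1 - Mblock w ε).PosSemidef := by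
  classical
  set S : Matrix (Fin (2 * m)) (Fin (2 * m)) ℝ :=
    Matrix.diagonal (fun i => Real.sqrt (wExt w i)) with hS
  set A : Matrix (Fin (2 * m)) (Fin (2 * m)) ℝ := V + ε • 1 + (1 / 2 : ℝ) • 1 with hA
  set cf : Fin (2 * m) → ℝ := fun i => if (i : ℕ) < m then ε else 1 + ε with hcf
  set nf : Fin (2 * m) → ℝ := fun i => 1 - wExt w i + wExt w i * (cf i)⁻¹ with hnf
  set B : Matrix (Fin (2 * m)) (Fin (2 * m)) ℝ :=
    1 - Matrix.diagonal (wExt w) + S * A⁻¹ * S with hB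
  set N : Matrix (Fin (2 * m)) (Fin (2 * m)) ℝ := Matrix.diagonal nf with hN
  have hwe : ∀ i, 0 < wExt w i := by
    intro i; unfold wExt; split <;> exact hw0 _
  have hwle : ∀ i, wExt w i ≤ 1 := by
    intro i; unfold wExt; split <;> exact hw1 _
  have hcpos : ∀ i, 0 < cf i := by
    intro i; rw [hcf]; dsimp only; split
    · exact hε
    · linarith
  have hnpos : ∀ i, 0 < nf i := by
    intro i
    have h2 : 0 < wExt w i * (cf i)⁻¹ := mul_pos (hwe i) (inv_pos.mpr (hcpos i))
    have h3 := hwle i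
    rw [hnf]; dsimp only; linarith
  -- A = (V + Z/2) + diagonal cf, hence A is PD and A - diagonal cf is PSD
  have hsum : A = (V + (1 / 2 : ℝ) • Zmat m) + Matrix.diagonal cf := by
    rw [hA, add_assoc, add_assoc]
    congr 1
    unfold Zmat
    rw [← Matrix.diagonal_one, ← Matrix.diagonal_smul, ← Matrix.diagonal_smul,
      ← Matrix.diagonal_smul, Matrix.diagonal_add, Matrix.diagonal_add]
    refine congrArg Matrix.diagonal (funext fun i => ?_)
    by_cases h : (i : ℕ) < m <;> simp [hcf, h] <;> ring
  have hCd : (Matrix.diagonal cf).PosDef := Matrix.PosDef.diagonal hcpos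
  have hAd : A.PosDef := by
    rw [hsum]; exact Matrix.PosDef.posSemidef_add hVZ hCd
  have hCA : ((Matrix.diagonal cf)⁻¹ - A⁻¹).PosSemidef := by
    refine inv_sub_inv_posSemidef hCd hAd ?_
    rw [hsum, add_sub_cancel_right]; exact hVZ
  have hsnz : ∀ i, Real.sqrt (wExt w i) ≠ 0 :=
    fun i => ne_of_gt (Real.sqrt_pos.mpr (hwe i))
  -- conjugated inequality
  have hSCSpsd : (S * ((Matrix.diagonal cf)⁻¹ - A⁻¹) * S).PosSemidef := by
    have := hCA.conjTranspose_mul_mul_same S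
    rwa [hS, diag_conjT, ← hS] at this
  have hSCS : S * (Matrix.diagonal cf)⁻¹ * S
      = Matrix.diagonal (fun i => wExt w i * (cf i)⁻¹) := by
    rw [hS, diag_inv (fun i => (hcpos i).ne'), Matrix.diagonal_mul_diagonal,
      Matrix.diagonal_mul_diagonal]
    exact congrArg Matrix.diagonal (funext fun i => by
      rw [mul_right_comm, Real.mul_self_sqrt (hwe i).le])
  have hNB : N - B = S * ((Matrix.diagonal cf)⁻¹ - A⁻¹) * S := by
    rw [Matrix.mul_sub, Matrix.sub_mul, hSCS, hB, sub_add_eq_sub_sub]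
    congr 1
    rw [hN, ← Matrix.diagonal_one,
      Matrix.diagonal_sub (fun _ => (1 : ℝ)) (wExt w), Matrix.diagonal_sub]
    refine congrArg Matrix.diagonal (funext fun i => ?_)
    simp only [hnf]; ring
  have hBpd : B.PosDef := by
    have h1 : ((1 : Matrix (Fin (2 * m)) (Fin (2 * m)) ℝ)
        - Matrix.diagonal (wExt w)).PosSemidef := by
      rw [← Matrix.diagonal_one, Matrix.diagonal_sub]
      refine Matrix.PosSemidef.diagonal fun i => ?_
      have := hwle i
      show (0 : ℝ) ≤ 1 - wExt w i
      linarith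
    have h2 : (S * A⁻¹ * S).PosDef := by
      rw [hS]; exact posDef_conj_diag hAd.inv hsnz
    rw [hB]; exact Matrix.PosDef.posSemidef_add h1 h2
  have hNpd : N.PosDef := Matrix.PosDef.diagonal hnpos
  have main : (B⁻¹ - N⁻¹).PosSemidef := by
    refine inv_sub_inv_posSemidef hBpd hNpd ?_
    rw [hNB]; exact hSCSpsd
  -- identify Mblock with N⁻¹
  have hNinv : N⁻¹ = Matrix.diagonal (fun i => (nf i)⁻¹) := by
    rw [hN]; exact diag_inv (fun i => (hnpos i).ne')
  have hinj : Function.Injective (splitIdx m) := by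
    intro i j hij
    unfold splitIdx at hij
    have hi := i.isLt; have hj := j.isLt
    split_ifs at hij <;> simp only [Sum.inl.injEq, Sum.inr.injEq, Fin.mk.injEq] at hij <;>
      (try exact absurd hij (by simp)) <;> exact Fin.ext (by omega)
  have hd1 : ∀ k, (1 - w k + ε⁻¹ * w k) ≠ 0 := fun k =>
    ne_of_gt (add_pos_of_nonneg_of_pos (by linarith [hw1 k])
      (mul_pos (inv_pos.mpr hε) (hw0 k)))
  have hd2 : ∀ k, (1 - w k + (1 + ε)⁻¹ * w k) ≠ 0 := fun k =>
    ne_of_gt (add_pos_of_nonneg_of_pos (by linarith [hw1 k])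
      (mul_pos (inv_pos.mpr (by linarith)) (hw0 k)))
  have hMb : Mblock w ε = Matrix.diagonal (fun i => (nf i)⁻¹) := by
    unfold Mblock
    have hD1 : (1 : Matrix (Fin m) (Fin m) ℝ) - Matrix.diagonal w + ε⁻¹ • Matrix.diagonal w
        = Matrix.diagonal (fun k => 1 - w k + ε⁻¹ * w k) := by
      rw [← Matrix.diagonal_one, ← Matrix.diagonal_smul,
        Matrix.diagonal_sub (fun _ => (1 : ℝ)) w, Matrix.diagonal_add]
      exact congrArg Matrix.diagonal (funext fun k => by
        simp [Pi.smul_apply, smul_eq_mul])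
    have hD2 : (1 : Matrix (Fin m) (Fin m) ℝ) - Matrix.diagonal w
          + (1 + ε)⁻¹ • Matrix.diagonal w
        = Matrix.diagonal (fun k => 1 - w k + (1 + ε)⁻¹ * w k) := by
      rw [← Matrix.diagonal_one, ← Matrix.diagonal_smul,
        Matrix.diagonal_sub (fun _ => (1 : ℝ)) w, Matrix.diagonal_add]
      exact congrArg Matrix.diagonal (funext fun k => by
        simp [Pi.smul_apply, smul_eq_mul])
    rw [hD1, hD2, diag_inv hd1, diag_inv hd2, Matrix.fromBlocks_diagonal,
      Matrix.submatrix_diagonal _ _ hinj]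
    refine congrArg Matrix.diagonal (funext fun i => ?_)
    show Sum.elim _ _ (splitIdx m i) = _
    unfold splitIdx
    by_cases h : (i : ℕ) < m
    · rw [dif_pos h, Sum.elim_inl]
      simp only [hnf, hcf, wExt, dif_pos h, if_pos h]
      congr 1
      ring
    · rw [dif_neg h, Sum.elim_inr]
      simp only [hnf, hcf, wExt, dif_neg h, if_neg h]
      congr 1
      ring
  have hfinal : Vupd (V + ε • 1) w + (1 / 2 : ℝ) • 1 - Mblock w ε = B⁻¹ - N⁻¹ := by
    rw [hMb, ← hNinv]
    show (-(1 / 2 : ℝ)) • 1 + B⁻¹ + (1 / 2 : ℝ) • 1 - N⁻¹ = B⁻¹ - N⁻¹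
    have hz : (-(1 / 2 : ℝ)) • (1 : Matrix (Fin (2 * m)) (Fin (2 * m)) ℝ)
        + B⁻¹ + (1 / 2 : ℝ) • 1 = B⁻¹ := by
      rw [add_right_comm, ← add_smul]
      norm_num
    rw [hz]
  rw [hfinal]
  exact main
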